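/- Every edge of the Euclidean minimum spanning tree of a finite set A of points in general position in ℝ² is an edge of the Delaunay triangulation of A. Concretely: if {a, b} is an edge of the minimum spanning tree of A, then the open disk with diameter segment ab contains no point of A. -/

import Mathlib

open scoped Classical

noncomputable section

/-- Points of the Euclidean plane. -/
abbrev Pt := EuclideanSpace ℝ (Fin 2)

/-- The Euclidean length of a potential edge on points of `S`. -/
noncomputable def edgeLen (S : Finset Pt) : Sym2 S → ℝ :=
  Sym2.lift ⟨fun (a b : S) => dist (a : Pt) (b : Pt), fun a b => dist_comm (a : Pt) (b : Pt)⟩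

/-- The total Euclidean edge length of a graph on the points of `S`. -/
noncomputable def treeCost (S : Finset Pt) (T : SimpleGraph S) : ℝ :=
  ∑ e ∈ Finset.univ.filter (· ∈ T.edgeSet), edgeLen S e

open SimpleGraph

/-- A point closer than `dist a b / 2` to the midpoint of `a` and `b` is strictly
closer than `dist a b` to both `a` and `b`. -/
lemma diametral_lt {E : Type*} [NormedAddCommGroup E] [InnerProductSpace ℝ E]
    (a b x : E) (h : dist x (midpoint ℝ a b) < dist a b / 2) :
    dist x a < dist a b ∧ dist x b < dist a b := by
  have h1 : x - midpoint ℝ a b + (2⁻¹:ℝ) • (b - a) = x - a := by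
    rw [midpoint_eq_smul_add, invOf_eq_inv]; module
  have h2 : x - midpoint ℝ a b - (2⁻¹:ℝ) • (b - a) = x - b := by
    rw [midpoint_eq_smul_add, invOf_eq_inv]; module
  have hpar := parallelogram_law_with_norm ℝ (x - midpoint ℝ a b) ((2⁻¹:ℝ) • (b - a))
  rw [h1, h2] at hpar
  have hn : ‖(2⁻¹:ℝ) • (b - a)‖ = dist a b / 2 := by
    rw [norm_smul, dist_eq_norm, norm_sub_rev]
    simp
    ring
  rw [hn] at hpar
  rw [dist_eq_norm x (midpoint ℝ a b)] at h
  constructor <;> rw [dist_eq_norm] <;>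
    nlinarith [norm_nonneg (x - a), norm_nonneg (x - b), dist_nonneg (x := a) (y := b),
      norm_nonneg (x - midpoint ℝ a b)]

/-- In a connected graph, after deleting the edge `{a,b}`, every vertex can still
reach `a` or `b`. -/
lemma reach_side {V : Type*} {T : SimpleGraph V} (hc : T.Connected) (a b x : V) :
    (T \ SimpleGraph.fromEdgeSet {s(a,b)}).Reachable x a ∨
    (T \ SimpleGraph.fromEdgeSet {s(a,b)}).Reachable x b := by
  obtain ⟨p⟩ := hc x a
  induction p with
  | nil => exact Or.inl (SimpleGraph.Reachable.refl _)
  | @cons u v w h q ih =>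
    rcases ih with ih | ih
    · by_cases he : s(u, v) = s(w, b)
      · rw [Sym2.eq_iff] at he
        rcases he with ⟨rfl, rfl⟩ | ⟨rfl, rfl⟩
        · exact Or.inl (SimpleGraph.Reachable.refl _)
        · exact Or.inr (SimpleGraph.Reachable.refl _)
      · have hadj : (T \ SimpleGraph.fromEdgeSet {s(w,b)}).Adj u v := by
          rw [SimpleGraph.sdiff_adj]
          exact ⟨h, by simp [SimpleGraph.fromEdgeSet_adj, he]⟩
        exact Or.inl (hadj.reachable.trans ih)
    · by_cases he : s(u, v) = s(w, b)
      · rw [Sym2.eq_iff] at he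
        rcases he with ⟨rfl, rfl⟩ | ⟨rfl, rfl⟩
        · exact Or.inl (SimpleGraph.Reachable.refl _)
        · exact Or.inr (SimpleGraph.Reachable.refl _)
      · have hadj : (T \ SimpleGraph.fromEdgeSet {s(w,b)}).Adj u v := by
          rw [SimpleGraph.sdiff_adj]
          exact ⟨h, by simp [SimpleGraph.fromEdgeSet_adj, he]⟩
        exact Or.inr (hadj.reachable.trans ih)

/-- Exchanging the tree edge `{a,b}` for `{x,b}`, where `x` lies on the `a`-side,
yields another tree. -/
lemma exchange_isTree {V : Type*} {T : SimpleGraph V} (hT : T.IsTree)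
    {a b x : V} (hab : T.Adj a b) (hxb : x ≠ b)
    (hreach : (T \ fromEdgeSet {s(a,b)}).Reachable x a) :
    ((T \ fromEdgeSet {s(a,b)}) ⊔ fromEdgeSet {s(x,b)}).IsTree := by
  set G := T \ fromEdgeSet {s(a,b)} with hG
  set T' := G ⊔ fromEdgeSet {s(x,b)} with hT'def
  have hbridge : ¬ G.Reachable a b :=
    (isBridge_iff).mp (isAcyclic_iff_forall_adj_isBridge.mp hT.IsAcyclic hab)
  have hGxb : ¬ G.Reachable x b := fun h => hbridge (hreach.symm.trans h)
  have hGle : G ≤ T' := le_sup_left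
  have hadjxb : T'.Adj x b :=
    (sup_adj _ _ _ _).mpr (Or.inr ((fromEdgeSet_adj _).mpr ⟨Set.mem_singleton _, hxb⟩))
  have hreachb : ∀ u : V, T'.Reachable u b := by
    intro u
    rcases reach_side hT.isConnected a b u with h | h
    · exact ((h.mono hGle).trans (hreach.symm.mono hGle)).trans hadjxb.reachable
    · exact h.mono hGle
  constructor
  · have : Nonempty V := hT.isConnected.nonempty
    exact SimpleGraph.Connected.mk fun u v => (hreachb u).trans (hreachb v).symm
  · intro u p hp
    by_cases he : s(x,b) ∈ p.edges
    · obtain ⟨-, hr⟩ := adj_and_reachable_delete_edges_iff_exists_cycle.mpr ⟨u, p, hp, he⟩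
      have hle : T' \ fromEdgeSet {s(x,b)} ≤ G := by
        rw [hT'def, sup_sdiff_right_self]
        exact sdiff_le
      exact hGxb (hr.mono hle)
    · have hsub : ∀ f ∈ p.edges, f ∈ T.edgeSet := by
        intro f hf
        have h1 := p.edges_subset_edgeSet hf
        rw [hT'def, edgeSet_sup] at h1
        rcases h1 with h1 | h1
        · rw [hG, edgeSet_sdiff] at h1
          exact h1.1
        · rw [edgeSet_fromEdgeSet] at h1
          exact absurd (h1.1 ▸ hf) he
      exact hT.IsAcyclic _ (hp.transfer hsub)


/-- The edge set of the exchanged graph. -/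
lemma exchange_edgeSet {V : Type*} (T : SimpleGraph V) {a b x : V}
    (hab : a ≠ b) (hxb : x ≠ b) :
    ((T \ fromEdgeSet {s(a,b)}) ⊔ fromEdgeSet {s(x,b)}).edgeSet
      = (T.edgeSet \ {s(a,b)}) ∪ {s(x,b)} := by
  rw [edgeSet_sup, edgeSet_sdiff, edgeSet_fromEdgeSet, edgeSet_fromEdgeSet]
  have h1 : ({s(a,b)} : Set (Sym2 V)) \ {e | e.IsDiag} = {s(a,b)} := by
    ext f
    simp only [Set.mem_diff, Set.mem_singleton_iff, Set.mem_setOf_eq,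
      and_iff_left_iff_imp]
    rintro rfl
    simp [hab]
  have h2 : ({s(x,b)} : Set (Sym2 V)) \ {e | e.IsDiag} = {s(x,b)} := by
    ext f
    simp only [Set.mem_diff, Set.mem_singleton_iff, Set.mem_setOf_eq,
      and_iff_left_iff_imp]
    rintro rfl
    simp [hxb]
  rw [Sym2.diagSet_eq_setOfPred_isDiag, h1, h2]


/-- `treeCost` as a sum over any finset representing the edge set (robust to
decidability instances). -/
lemma treeCost_filter (S : Finset Pt) (T : SimpleGraph S) (F : Finset (Sym2 S))
    (hF : ∀ e, e ∈ F ↔ e ∈ T.edgeSet) : treeCost S T = ∑ e ∈ F, edgeLen S e := by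
  unfold treeCost
  refine Finset.sum_congr ?_ fun _ _ => rfl
  ext f
  simp [Finset.mem_filter, hF f]

/-- The exchange argument: if `{a,b}` is an edge of a minimum spanning tree and
`x` is on the `a`-side after deleting it, then `dist x b` cannot be smaller
than `dist a b`. -/
lemma swap_contra (A : Finset Pt) (T : SimpleGraph A) (hT : T.IsTree)
    (hmin : ∀ T' : SimpleGraph A, T'.IsTree → treeCost A T ≤ treeCost A T')
    (a b x : A) (hab : T.Adj a b)
    (hreach : (T \ fromEdgeSet {s(a,b)}).Reachable x a)
    (hlt : dist (x : Pt) (b : Pt) < dist (a : Pt) (b : Pt)) : False := by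
  have hbridge : ¬ (T \ fromEdgeSet {s(a,b)}).Reachable a b :=
    (isBridge_iff).mp (isAcyclic_iff_forall_adj_isBridge.mp hT.IsAcyclic hab)
  have hxb : x ≠ b := by
    rintro rfl
    exact hbridge hreach.symm
  have hGxb : ¬ (T \ fromEdgeSet {s(a,b)}).Reachable x b := fun h =>
    hbridge (hreach.symm.trans h)
  set T' := (T \ fromEdgeSet {s(a,b)}) ⊔ fromEdgeSet {s(x,b)} with hT'def
  have htree : T'.IsTree := exchange_isTree hT hab hxb hreach
  have hcost := hmin T' htree
  set e : Sym2 A := s(a,b) with he_def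
  set e' : Sym2 A := s(x,b) with he'_def
  set S : Finset (Sym2 A) := Finset.univ.filter (· ∈ T.edgeSet) with hS_def
  have heS : e ∈ S := by
    simp only [hS_def, Finset.mem_filter, Finset.mem_univ, true_and]
    exact hab
  have he'G : e' ∉ (T \ fromEdgeSet {s(a,b)}).edgeSet := fun h =>
    hGxb (SimpleGraph.Adj.reachable ((SimpleGraph.mem_edgeSet _).mp h))
  have he'ne : e' ∉ S.erase e := by
    intro h
    obtain ⟨hne, hmem⟩ := Finset.mem_erase.mp h
    simp only [hS_def, Finset.mem_filter, Finset.mem_univ, true_and] at hmem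
    apply he'G
    rw [edgeSet_sdiff, edgeSet_fromEdgeSet]
    refine ⟨hmem, fun hcontra => hne ?_⟩
    exact hcontra.1
  have hES := exchange_edgeSet T (fun h => T.irrefl (h ▸ hab)) hxb
  have hS' : Finset.univ.filter (· ∈ T'.edgeSet) = insert e' (S.erase e) := by
    ext f
    simp only [Finset.mem_filter, Finset.mem_univ, true_and, Finset.mem_insert,
      Finset.mem_erase, hS_def, hT'def, he_def, he'_def, hES, Set.mem_union, Set.mem_diff,
      Set.mem_singleton_iff]
    tauto
  have h1 : treeCost A T' = edgeLen A e' + ∑ f ∈ S.erase e, edgeLen A f := by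
    rw [treeCost_filter A T' (insert e' (S.erase e)) ?_, Finset.sum_insert he'ne]
    intro f
    rw [hT'def, hES]
    simp only [Finset.mem_insert, Finset.mem_erase, hS_def, Finset.mem_filter,
      Finset.mem_univ, true_and, Set.mem_union, Set.mem_diff, Set.mem_singleton_iff]
    tauto
  have h2 : treeCost A T = edgeLen A e + ∑ f ∈ S.erase e, edgeLen A f := by
    rw [treeCost_filter A T S fun f => by
      simp [hS_def, Finset.mem_filter]]
    exact (Finset.add_sum_erase S (edgeLen A) heS).symm
  have hlen : edgeLen A e = dist (a : Pt) (b : Pt) := by simp [edgeLen, he_def]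
  have hlen' : edgeLen A e' = dist (x : Pt) (b : Pt) := by simp [edgeLen, he'_def]
  rw [h1, h2, hlen, hlen'] at hcost
  linarith

/-- For a finite planar point set in general position (all
pairwise distances distinct), every edge `{a,b}` of a Euclidean minimum spanning
tree has an empty open diametral disk: every point of `A` is at distance at least
`dist a b / 2` from the midpoint of `a` and `b`.  (Hence MST ⊆ Gabriel ⊆ Delaunay.) -/
theorem mst_edge_has_empty_diametral_disk (A : Finset Pt)
    (hgen : ∀ a ∈ A, ∀ b ∈ A, ∀ c ∈ A, ∀ d ∈ A,
      a ≠ b → c ≠ d → dist a b = dist c d → ({a, b} : Finset Pt) = {c, d})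
    (T : SimpleGraph A) (hT : T.IsTree)
    (hmin : ∀ T' : SimpleGraph A, T'.IsTree → treeCost A T ≤ treeCost A T')
    (a b : A) (hab : T.Adj a b) :
    ∀ x ∈ A, dist (a : Pt) (b : Pt) / 2 ≤ dist x (midpoint ℝ (a : Pt) (b : Pt)) := by
  intro x hxA
  by_contra hcon
  push_neg at hcon
  obtain ⟨hxa, hxb⟩ := diametral_lt (a : Pt) (b : Pt) x hcon
  set X : A := ⟨x, hxA⟩ with hX
  rcases reach_side hT.isConnected a b X with h | h
  · exact swap_contra A T hT hmin a b X hab h hxb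
  · refine swap_contra A T hT hmin b a X hab.symm ?_ ?_
    · rw [show s(b,a) = s(a,b) from Sym2.eq_swap]
      exact h
    · rw [dist_comm (b : Pt) (a : Pt)]
      exact hxa
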